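/- Let μ be twice continuously differentiable on [0,1]. Then there exist constants C > 0 and R > e such that for every p ∈ ℂ ∖ (−∞,0] with |p| ≥ R one has |K(p) − μ(1)/Log p| ≤ C (log|p|)^{−2}, where Log is the principal branch of the logarithm; that is, K(p) = μ(1)/Log p + O((log|p|)^{−2}) as |p| → ∞ in ℂ ∖ (−∞,0]. -/

import Mathlib

open MeasureTheory Filter Set

/-- `K(p) = ∫₀¹ p^{α-1} μ(α) dα`, with `p^{α-1} = exp((α-1) Log p)` using the
principal branch of the logarithm. -/
noncomputable def Kfun (μ : ℝ → ℝ) (p : ℂ) : ℂ :=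
  ∫ α in (0:ℝ)..1, Complex.exp (((α : ℂ) - 1) * Complex.log p) * (μ α : ℂ)

theorem Kfun_asymp_infty (μ : ℝ → ℝ)
    (hC2 : ContDiffOn ℝ 2 μ (Set.Icc 0 1)) :
    ∃ C > (0:ℝ), ∃ R > Real.exp 1, ∀ p : ℂ, p ∈ Complex.slitPlane →
      R ≤ ‖p‖ →
      ‖Kfun μ p - (μ 1 : ℂ) / Complex.log p‖
        ≤ C / (Real.log (‖p‖)) ^ 2 := by
  -- Lipschitz bound for μ on [0,1]
  have hdiff : DifferentiableOn ℝ μ (Set.Icc 0 1) :=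
    hC2.differentiableOn (by norm_num)
  have hUD : UniqueDiffOn ℝ (Set.Icc (0:ℝ) 1) := uniqueDiffOn_Icc one_pos
  have hcontd : ContinuousOn (fun x => fderivWithin ℝ μ (Set.Icc 0 1) x) (Set.Icc 0 1) :=
    hC2.continuousOn_fderivWithin hUD (by norm_num)
  obtain ⟨M₀, hM₀⟩ := isCompact_Icc.exists_bound_of_continuousOn hcontd
  set M : ℝ := max M₀ 0 with hMdef
  have hMnonneg : 0 ≤ M := le_max_right _ _
  have hlip : ∀ α ∈ Set.Icc (0:ℝ) 1, |μ α - μ 1| ≤ M * (1 - α) := by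
    intro α hα
    have := Convex.norm_image_sub_le_of_norm_fderivWithin_le (C := M) hdiff
      (fun x hx => le_trans (hM₀ x hx) (le_max_left _ _)) (convex_Icc 0 1)
      (Set.right_mem_Icc.2 zero_le_one) hα
    simpa [Real.norm_eq_abs, abs_of_nonpos (by linarith [hα.2] : α - 1 ≤ 0)] using this
  refine ⟨M + |μ 1| + 1, by positivity, Real.exp 2, Real.exp_lt_exp.2 (by norm_num), ?_⟩
  intro p hp hRp
  set c : ℝ := Real.log (‖p‖) with hcdef
  have hpne : p ≠ 0 := Complex.slitPlane_ne_zero hp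
  have habs_pos : (0:ℝ) < ‖p‖ := norm_pos_iff.mpr hpne
  have hc2 : (2:ℝ) ≤ c := by
    have := Real.log_le_log (Real.exp_pos 2) hRp
    simpa using this
  have hcpos : (0:ℝ) < c := by linarith
  have hcle : c ≤ ‖p‖ := by
    have := Real.log_le_sub_one_of_pos habs_pos
    linarith
  set L : ℂ := Complex.log p with hLdef
  have hLre : L.re = c := Complex.log_re p
  have hLne : L ≠ 0 := by
    intro h
    rw [h] at hLre
    simp at hLre
    linarith
  have habsL : c ≤ ‖L‖ := by
    calc c = |L.re| := by rw [hLre]; exact (abs_of_pos hcpos).symm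
    _ ≤ ‖L‖ := Complex.abs_re_le_norm L
  -- abs of the exponentials
  have hre : ∀ α : ℝ, (((α:ℂ) - 1) * L).re = (α - 1) * c := by
    intro α
    simp [Complex.mul_re, hLre]
  have habs_exp : ∀ α : ℝ, ‖Complex.exp (((α:ℂ) - 1) * L)‖
      = Real.exp ((α - 1) * c) := by
    intro α; rw [Complex.norm_exp, hre]
  -- integrability
  have hcontμ : ContinuousOn (fun α : ℝ => (μ α : ℂ)) (Set.Icc 0 1) :=
    Complex.continuous_ofReal.comp_continuousOn hC2.continuousOn
  have hconte : Continuous (fun α : ℝ => Complex.exp (((α:ℂ) - 1) * L)) := by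
    fun_prop
  have hint1 : IntervalIntegrable (fun α : ℝ => Complex.exp (((α:ℂ) - 1) * L) * (μ α : ℂ))
      MeasureTheory.volume 0 1 := by
    apply ContinuousOn.intervalIntegrable
    rw [Set.uIcc_of_le zero_le_one]
    exact hconte.continuousOn.mul hcontμ
  have hint2 : IntervalIntegrable (fun α : ℝ => Complex.exp (((α:ℂ) - 1) * L) * ((μ 1 : ℝ) : ℂ))
      MeasureTheory.volume 0 1 :=
    (hconte.mul continuous_const).intervalIntegrable 0 1
  -- ∫₀¹ exp((α-1)L) dα = (1 - exp(-L))/L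
  have hE : (∫ α in (0:ℝ)..1, Complex.exp (((α:ℂ) - 1) * L))
      = (1 - Complex.exp (-L)) / L := by
    have hderiv : ∀ α ∈ Set.uIcc (0:ℝ) 1,
        HasDerivAt (fun α : ℝ => Complex.exp (((α:ℂ) - 1) * L) / L)
          (Complex.exp (((α:ℂ) - 1) * L)) α := by
      intro α _
      have h1 : HasDerivAt (fun z : ℂ => Complex.exp ((z - 1) * L) / L)
          (Complex.exp (((α:ℂ) - 1) * L) * L / L) (α : ℂ) := by
        simpa using ((((hasDerivAt_id ((α:ℂ))).sub_const 1).mul_const L).cexp).div_const L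
      have h2 := h1.comp_ofReal
      rw [mul_div_assoc, div_self hLne, mul_one] at h2
      exact h2
    rw [intervalIntegral.integral_eq_sub_of_hasDerivAt hderiv
      (hconte.intervalIntegrable 0 1)]
    rw [show ((1:ℝ):ℂ) - 1 = 0 by norm_num, show ((0:ℝ):ℂ) - 1 = -1 by norm_num,
      zero_mul, Complex.exp_zero, neg_one_mul, sub_div]
  -- Splitting
  have hsplit : Kfun μ p - (μ 1 : ℂ) / L
      = (∫ α in (0:ℝ)..1, Complex.exp (((α:ℂ) - 1) * L) * ((μ α : ℂ) - (μ 1 : ℂ)))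
        - (μ 1 : ℂ) * Complex.exp (-L) / L := by
    have : (∫ α in (0:ℝ)..1, Complex.exp (((α:ℂ) - 1) * L) * ((μ α : ℂ) - (μ 1 : ℂ)))
        = Kfun μ p - ((1 - Complex.exp (-L)) / L) * (μ 1 : ℂ) := by
      have : (∫ α in (0:ℝ)..1, Complex.exp (((α:ℂ) - 1) * L) * ((μ α : ℂ) - (μ 1 : ℂ)))
          = (∫ α in (0:ℝ)..1, Complex.exp (((α:ℂ) - 1) * L) * (μ α : ℂ))
            - (∫ α in (0:ℝ)..1, Complex.exp (((α:ℂ) - 1) * L) * ((μ 1 : ℝ) : ℂ)) := by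
        rw [← intervalIntegral.integral_sub hint1 hint2]
        congr 1; ext α; ring
      rw [this, intervalIntegral.integral_mul_const, hE]
      rfl
    rw [this]
    field_simp
    ring
  rw [hsplit]
  -- bound the boundary term
  have hbd2 : ‖(μ 1 : ℂ) * Complex.exp (-L) / L‖ ≤ |μ 1| / c ^ 2 := by
    rw [norm_div, norm_mul, Complex.norm_exp]
    have hre2 : (-L).re = -c := by simp [hLre]
    rw [hre2, Complex.norm_real, Real.norm_eq_abs]
    have h1 : Real.exp (-c) = (‖p‖)⁻¹ := by
      rw [Real.exp_neg, hcdef, Real.exp_log habs_pos]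
    rw [h1]
    rw [div_le_div_iff₀ (lt_of_lt_of_le hcpos habsL) (by positivity)]
    have : |μ 1| * c ^ 2 ≤ |μ 1| * (‖p‖ * ‖L‖) := by
      apply mul_le_mul_of_nonneg_left _ (abs_nonneg _)
      calc c ^ 2 = c * c := sq c
      _ ≤ ‖p‖ * ‖L‖ :=
        mul_le_mul hcle habsL hcpos.le habs_pos.le
    calc |μ 1| * (‖p‖)⁻¹ * c ^ 2
        = |μ 1| * c ^ 2 * (‖p‖)⁻¹ := by ring
      _ ≤ |μ 1| * (‖p‖ * ‖L‖) * (‖p‖)⁻¹ := by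
          apply mul_le_mul_of_nonneg_right this (by positivity)
      _ = |μ 1| * ‖L‖ := by field_simp
  -- bound the integral term
  have hbd1 : ‖∫ α in (0:ℝ)..1,
      Complex.exp (((α:ℂ) - 1) * L) * ((μ α : ℂ) - (μ 1 : ℂ))‖ ≤ M / c ^ 2 := by
    have hg : IntervalIntegrable (fun α : ℝ => M * (1 - α) * Real.exp ((α - 1) * c))
        MeasureTheory.volume 0 1 := by
      apply Continuous.intervalIntegrable
      fun_prop
    have hptwise : ∀ᵐ (α : ℝ) ∂(MeasureTheory.volume.restrict (Set.uIoc (0:ℝ) 1)),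
        ‖Complex.exp (((α:ℂ) - 1) * L) * ((μ α : ℂ) - (μ 1 : ℂ))‖
          ≤ M * (1 - α) * Real.exp ((α - 1) * c) := by
      rw [Set.uIoc_of_le zero_le_one]
      filter_upwards [MeasureTheory.ae_restrict_mem measurableSet_Ioc] with α hα
      have hα' : α ∈ Set.Icc (0:ℝ) 1 := ⟨hα.1.le, hα.2⟩
      rw [norm_mul, habs_exp]
      have : ‖(μ α : ℂ) - (μ 1 : ℂ)‖ = |μ α - μ 1| := by
        rw [← Complex.ofReal_sub, Complex.norm_real, Real.norm_eq_abs]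
      rw [this]
      calc Real.exp ((α - 1) * c) * |μ α - μ 1|
          ≤ Real.exp ((α - 1) * c) * (M * (1 - α)) :=
            mul_le_mul_of_nonneg_left (hlip α hα') (Real.exp_pos _).le
        _ = M * (1 - α) * Real.exp ((α - 1) * c) := by ring
    have hI : (∫ α in (0:ℝ)..1, M * (1 - α) * Real.exp ((α - 1) * c)) ≤ M / c ^ 2 := by
      have hderiv : ∀ α ∈ Set.uIcc (0:ℝ) 1,
          HasDerivAt (fun α : ℝ => M * (((1 - α) / c + 1 / c ^ 2) * Real.exp ((α - 1) * c)))
            (M * (1 - α) * Real.exp ((α - 1) * c)) α := by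
        intro α _
        have h1 : HasDerivAt (fun α : ℝ => (1 - α) / c + 1 / c ^ 2) (-1 / c) α := by
          have : HasDerivAt (fun α : ℝ => (1 - α) / c) (-1 / c) α :=
            (((hasDerivAt_id α).const_sub 1).div_const c)
          exact this.add_const (1 / c ^ 2)
        have h2 : HasDerivAt (fun α : ℝ => Real.exp ((α - 1) * c))
            (Real.exp ((α - 1) * c) * c) α := by
          have := (((hasDerivAt_id α).sub_const 1).mul_const c).exp
          simpa [mul_comm] using this
        have h3 := (h1.mul h2).const_mul M
        refine h3.congr_deriv ?_
        have hc0 : c ≠ 0 := hcpos.ne'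
        field_simp
        ring
      have hcont' : Continuous (fun α : ℝ => M * (1 - α) * Real.exp ((α - 1) * c)) := by
        fun_prop
      rw [intervalIntegral.integral_eq_sub_of_hasDerivAt hderiv (hcont'.intervalIntegrable 0 1)]
      have hnn : 0 ≤ M * ((1 / c + 1 / c ^ 2) * Real.exp ((0 - 1) * c)) := by positivity
      have : M * (((1 - 1) / c + 1 / c ^ 2) * Real.exp (((1:ℝ) - 1) * c)) = M / c ^ 2 := by
        norm_num [div_eq_mul_inv]
      rw [this]
      have h10 : (1 - (0:ℝ)) / c = 1 / c := by norm_num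
      rw [h10]
      linarith
    calc ‖∫ α in (0:ℝ)..1,
          Complex.exp (((α:ℂ) - 1) * L) * ((μ α : ℂ) - (μ 1 : ℂ))‖
        ≤ |∫ α in (0:ℝ)..1, M * (1 - α) * Real.exp ((α - 1) * c)| :=
          intervalIntegral.norm_integral_le_abs_of_norm_le hptwise hg
      _ = ∫ α in (0:ℝ)..1, M * (1 - α) * Real.exp ((α - 1) * c) := by
          apply abs_of_nonneg
          apply intervalIntegral.integral_nonneg zero_le_one
          intro α hα
          have : 0 ≤ 1 - α := by linarith [hα.2]
          positivity
      _ ≤ M / c ^ 2 := hI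
  calc ‖(∫ α in (0:ℝ)..1,
        Complex.exp (((α:ℂ) - 1) * L) * ((μ α : ℂ) - (μ 1 : ℂ)))
        - (μ 1 : ℂ) * Complex.exp (-L) / L‖
      ≤ ‖∫ α in (0:ℝ)..1,
          Complex.exp (((α:ℂ) - 1) * L) * ((μ α : ℂ) - (μ 1 : ℂ))‖
        + ‖(μ 1 : ℂ) * Complex.exp (-L) / L‖ := by
        exact norm_sub_le _ _
    _ ≤ M / c ^ 2 + |μ 1| / c ^ 2 := add_le_add hbd1 hbd2
    _ ≤ (M + |μ 1| + 1) / c ^ 2 := by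
        rw [← add_div]
        apply div_le_div_of_nonneg_right _ (by positivity)
        · linarith
    _ = (M + |μ 1| + 1) / Real.log (‖p‖) ^ 2 := by rw [hcdef]
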